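/- The distance between 𝒞₁ and 𝒞₂ is zero, i.e., inf{‖x − y‖ : x ∈ 𝒞₁, y ∈ 𝒞₂} = 0, even though 𝒞₁ ∩ 𝒞₂ = ∅ and both sets are closed. -/

import Mathlib

open Filter Topology Set

lemma ray_sep {U : Type*} [NormedAddCommGroup U] [NormedSpace ℝ U]
    (u : ℕ → U) (hnorm : ∀ n, ‖u n‖ = 1)
    (hsep : ∀ n m, n ≠ m → (1 : ℝ) / 2 ≤ ‖u n - u m‖)
    {n m : ℕ} (hnm : n ≠ m) {t s : ℝ} (ht : 0 < t) (hs : 0 ≤ s) :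
    t / 4 ≤ ‖t • u n - s • u m‖ := by
  have h1 : |t - s| ≤ ‖t • u n - s • u m‖ := by
    have h := abs_norm_sub_norm_le (t • u n) (s • u m)
    rwa [norm_smul, norm_smul, hnorm, hnorm, Real.norm_eq_abs, Real.norm_eq_abs,
      mul_one, mul_one, abs_of_pos ht, abs_of_nonneg hs] at h
  have heq : t • u n - s • u m = t • (u n - u m) + (t - s) • u m := by module
  have h3 : ‖t • (u n - u m)‖ ≤ ‖t • (u n - u m) + (t - s) • u m‖ + ‖(t - s) • u m‖ :=
    norm_le_add_norm_add _ _
  have h4 : ‖t • (u n - u m)‖ = t * ‖u n - u m‖ := by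
    rw [norm_smul, Real.norm_eq_abs, abs_of_pos ht]
  have h5 : ‖(t - s) • u m‖ = |t - s| := by
    rw [norm_smul, hnorm, Real.norm_eq_abs, mul_one]
  have h6 : (1 : ℝ) / 2 ≤ ‖u n - u m‖ := hsep n m hnm
  have h2 : t / 2 - |t - s| ≤ ‖t • u n - s • u m‖ := by
    rw [heq]; nlinarith [norm_nonneg (t • (u n - u m) + (t - s) • u m)]
  linarith

/-- The distance between the unit sphere `𝒞₁` and the set
`𝒞₂ = (⋃ n, {t • uₙ : 0 < t ≤ tₙ}) ∪ {0}` is zero, even though the two sets are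
disjoint and both are closed. -/
theorem dist_C1_C2_eq_zero {U : Type*} [NormedAddCommGroup U]
    [NormedSpace ℝ U] [CompleteSpace U] (hU : ¬ FiniteDimensional ℝ U)
    (u : ℕ → U) (hnorm : ∀ n, ‖u n‖ = 1)
    (hsep : ∀ n m, n ≠ m → (1 : ℝ) / 2 ≤ ‖u n - u m‖) :
    sInf {d : ℝ | ∃ x ∈ {v : U | ‖v‖ = 1},
        ∃ y ∈ (⋃ n : ℕ, {z : U | ∃ t : ℝ, 0 < t ∧ t ≤ 1 - 1 / ((n : ℝ) + 1) ∧
          z = t • u n}) ∪ {(0 : U)}, d = ‖x - y‖} = 0 ∧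
    {v : U | ‖v‖ = 1} ∩
      ((⋃ n : ℕ, {z : U | ∃ t : ℝ, 0 < t ∧ t ≤ 1 - 1 / ((n : ℝ) + 1) ∧
        z = t • u n}) ∪ {(0 : U)}) = ∅ ∧
    IsClosed {v : U | ‖v‖ = 1} ∧
    IsClosed ((⋃ n : ℕ, {z : U | ∃ t : ℝ, 0 < t ∧ t ≤ 1 - 1 / ((n : ℝ) + 1) ∧
      z = t • u n}) ∪ {(0 : U)}) := by
  set C2 : Set U := (⋃ n : ℕ, {z : U | ∃ t : ℝ, 0 < t ∧ t ≤ 1 - 1 / ((n : ℝ) + 1) ∧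
      z = t • u n}) ∪ {(0 : U)} with hC2
  set D : Set ℝ := {d : ℝ | ∃ x ∈ {v : U | ‖v‖ = 1}, ∃ y ∈ C2, d = ‖x - y‖} with hD
  have hlb : ∀ d ∈ D, (0 : ℝ) ≤ d := by
    rintro d ⟨x, -, y, -, rfl⟩; exact norm_nonneg _
  have hmem : ∀ n : ℕ, (1 : ℝ) / ((n : ℝ) + 2) ∈ D := by
    intro n
    have hn2 : (0 : ℝ) < (n : ℝ) + 2 := by positivity
    refine ⟨u (n + 1), hnorm _, (1 - 1 / ((n : ℝ) + 2)) • u (n + 1), ?_, ?_⟩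
    · left
      refine mem_iUnion.2 ⟨n + 1, 1 - 1 / ((n : ℝ) + 2), ?_, ?_, rfl⟩
      · have : (1 : ℝ) / ((n : ℝ) + 2) < 1 := by
          rw [div_lt_one hn2]; linarith
        linarith
      · push_cast; ring_nf; exact le_refl _
    · have : u (n + 1) - (1 - 1 / ((n : ℝ) + 2)) • u (n + 1)
          = (1 / ((n : ℝ) + 2)) • u (n + 1) := by module
      rw [this, norm_smul, hnorm, Real.norm_eq_abs, abs_of_pos (by positivity), mul_one]
  have hDne : D.Nonempty := ⟨_, hmem 0⟩
  have hbdd : BddBelow D := ⟨0, hlb⟩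
  refine ⟨?_, ?_, ?_, ?_⟩
  · refine le_antisymm ?_ (le_csInf hDne hlb)
    have htend : Tendsto (fun n : ℕ => (1 : ℝ) / ((n : ℝ) + 2)) atTop (𝓝 0) := by
      have h : Tendsto (fun n : ℕ => ((n : ℝ) + 2)) atTop atTop := by
        apply tendsto_atTop_add_const_right; exact tendsto_natCast_atTop_atTop
      simpa [one_div, Pi.inv_def] using h.inv_tendsto_atTop
    exact ge_of_tendsto' htend (fun n => csInf_le hbdd (hmem n))
  · ext v
    simp only [mem_inter_iff, mem_empty_iff_false, iff_false, not_and]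
    rintro hv (hv2 | hv0)
    · obtain ⟨n, t, ht, htn, rfl⟩ := mem_iUnion.1 hv2
      have h1 : ‖t • u n‖ = t := by
        rw [norm_smul, hnorm, Real.norm_eq_abs, abs_of_pos ht, mul_one]
      have h2 : (0 : ℝ) < 1 / ((n : ℝ) + 1) := by positivity
      rw [mem_setOf_eq, h1] at hv
      linarith
    · rw [mem_singleton_iff] at hv0
      subst hv0
      simp at hv
  · have : {v : U | ‖v‖ = 1} = (norm : U → ℝ) ⁻¹' {1} := rfl
    rw [this]
    exact isClosed_singleton.preimage continuous_norm
  · -- C2 is closed: sequential argument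
    rw [← isSeqClosed_iff_isClosed]
    intro x p hx hxp
    by_cases hp : p = 0
    · exact Or.inr (by simp [hp])
    have hr : 0 < ‖p‖ := norm_pos_iff.2 hp
    set r := ‖p‖ with hrdef
    -- eventually close to p
    obtain ⟨N, hN⟩ := (Metric.tendsto_atTop.1 hxp) (r / 16) (by positivity)
    set y : ℕ → U := fun k => x (k + N) with hy
    have hyp : Tendsto y atTop (𝓝 p) := hxp.comp (tendsto_add_atTop_nat N)
    have hyclose : ∀ k, ‖y k - p‖ < r / 16 := by
      intro k
      have := hN (k + N) (Nat.le_add_left N k)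
      rwa [dist_eq_norm] at this
    have hynorm : ∀ k, r - r / 16 < ‖y k‖ := by
      intro k
      have h := norm_sub_norm_le p (y k)
      have h2 : ‖p - y k‖ < r / 16 := by
        rw [norm_sub_rev]; exact hyclose k
      linarith
    have hyC : ∀ k, ∃ n : ℕ, ∃ t : ℝ, 0 < t ∧ t ≤ 1 - 1 / ((n : ℝ) + 1) ∧ y k = t • u n := by
      intro k
      rcases hx (k + N) with h | h
      · obtain ⟨n, t, ht⟩ := mem_iUnion.1 h
        exact ⟨n, t, ht⟩
      · exfalso
        rw [mem_singleton_iff] at h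
        have := hynorm k
        rw [hy] at this
        simp only [h, norm_zero] at this
        linarith
    choose nn tt htpos httle hyeq using hyC
    have htval : ∀ k, tt k = ‖y k‖ := by
      intro k
      rw [hyeq k, norm_smul, hnorm, Real.norm_eq_abs, abs_of_pos (htpos k), mul_one]
    have hnconst : ∀ k, nn k = nn 0 := by
      intro k
      by_contra hne
      have hkey := ray_sep u hnorm hsep hne (htpos k) (le_of_lt (htpos 0))
      rw [← hyeq k, ← hyeq 0] at hkey
      have hdist : ‖y k - y 0‖ < r / 8 := by
        have h1 := hyclose k
        have h2 := hyclose 0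
        have := norm_sub_le_norm_sub_add_norm_sub (y k) p (y 0)
        have h3 : ‖y k - y 0‖ ≤ ‖y k - p‖ + ‖p - y 0‖ := by
          have := norm_add_le (y k - p) (p - y 0)
          simpa using this
        rw [norm_sub_rev p (y 0)] at h3
        linarith
      have htk : r / 2 < tt k := by
        rw [htval k]
        have := hynorm k
        linarith
      linarith
    -- all y k lie in the compact set S = image of Icc under t ↦ t • u (nn 0)
    set n0 := nn 0 with hn0
    set S : Set U := (fun t : ℝ => t • u n0) '' Set.Icc 0 (1 - 1 / ((n0 : ℝ) + 1)) with hS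
    have hScomp : IsCompact S :=
      isCompact_Icc.image (continuous_id.smul continuous_const)
    have hyS : ∀ k, y k ∈ S := by
      intro k
      refine ⟨tt k, ⟨le_of_lt (htpos k), ?_⟩, ?_⟩
      · have := httle k; rw [hnconst k] at this; exact this
      · show tt k • u n0 = y k
        rw [hyeq k, hnconst k]
    have hpS : p ∈ S := hScomp.isClosed.mem_of_tendsto hyp (Eventually.of_forall hyS)
    obtain ⟨τ, ⟨hτ0, hτ1⟩, hτeq⟩ := hpS
    have hτpos : 0 < τ := by
      rcases lt_or_eq_of_le hτ0 with h | h
      · exact h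
      · exfalso; apply hp; rw [← hτeq, ← h]; simp
    exact Or.inl (mem_iUnion.2 ⟨n0, τ, hτpos, hτ1, hτeq.symm⟩)
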